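/- For all n ≥ 1, k ≥ 0 and 1 ≤ ℓ ≤ n, the number of k-Rvalid vectors of size n having exactly ℓ nonempty entries equals the (1,ℓ) entry of the k-th power of the matrix S_n. -/

import Mathlib

open Finset

/-- `Π·h`: the vector whose `q`-th entry is the union of the `Π p` over all `p` with `h p = q`. -/
def dotAct {n : ℕ} (Pi : Fin n → Finset ℕ) (h : Fin n → Fin n) : Fin n → Finset ℕ :=
  fun q => (Finset.univ.filter (fun p => h p = q)).biUnion Pi

/-- Entrywise union of two vectors of sets. -/
def vUnion {n : ℕ} (Pi Pi' : Fin n → Finset ℕ) : Fin n → Finset ℕ :=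
  fun q => Pi q ∪ Pi' q

/-- `r = max (π₀ ∪ … ∪ π_{n−1})`. -/
def vMax {n : ℕ} (Pi : Fin n → Finset ℕ) : ℕ :=
  (Finset.univ.sup Pi).sup id

/-- `Π↑`: add `r = max (π₀ ∪ … ∪ π_{n−1})` to every element of every entry. -/
def vUp {n : ℕ} (Pi : Fin n → Finset ℕ) : Fin n → Finset ℕ :=
  fun q => (Pi q).image (· + vMax Pi)

/-- A `k`-EXPcomposition of size `n`: pairwise disjoint entries whose union is `{1,…,2^k}`. -/
def IsEXP {n : ℕ} (k : ℕ) (Pi : Fin n → Finset ℕ) : Prop :=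
  (∀ p q : Fin n, p ≠ q → Disjoint (Pi p) (Pi q)) ∧
    Finset.univ.sup Pi = Finset.Icc 1 (2 ^ k)

/-- A `k`-Rvalid vector of size `n`. -/
def IsRvalid {n : ℕ} (k : ℕ) (ρ : Fin n → Finset ℕ) : Prop :=
  IsEXP k ρ ∧ (∀ p : Fin n, p.val = 0 → 1 ∈ ρ p) ∧
    ∀ k' < k, ∀ i ∈ Finset.Icc 1 (2 ^ k'), ∀ j ∈ Finset.Icc 1 (2 ^ k'),
      (∃ α, i ∈ ρ α ∧ j ∈ ρ α) → ∃ β, i + 2 ^ k' ∈ ρ β ∧ j + 2 ^ k' ∈ ρ β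

/-- A `k`-Lvalid vector of size `m`. -/
def IsLvalid {m : ℕ} (k : ℕ) (lam : Fin m → Finset ℕ) : Prop :=
  IsEXP k lam ∧ (∀ p : Fin m, p.val = 0 → 2 ^ k ∈ lam p) ∧
    ∀ k' < k, ∀ i ∈ Finset.Icc 1 (2 ^ k'), ∀ j ∈ Finset.Icc 1 (2 ^ k'),
      (∃ α, 2 ^ k + 1 - i ∈ lam α ∧ 2 ^ k + 1 - j ∈ lam α) →
        ∃ β, 2 ^ k + 1 - (i + 2 ^ k') ∈ lam β ∧ 2 ^ k + 1 - (j + 2 ^ k') ∈ lam β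

/-- Number of nonempty entries of a vector of sets. -/
def nne {n : ℕ} (Pi : Fin n → Finset ℕ) : ℕ :=
  (Finset.univ.filter (fun q => Pi q ≠ ∅)).card

/-- `succ(P) = {P ∪ (P·g)↑ : g}`. -/
def succSet {n : ℕ} (P : Fin n → Finset ℕ) : Finset (Fin n → Finset ℕ) :=
  (Finset.univ : Finset (Fin n → Fin n)).image (fun g => vUnion P (vUp (dotAct P g)))

/-- The graded set `U_{m,n}^{(k)}` of U-pairs. -/
def Uset (m n : ℕ) : ℕ → Set ((Fin m → Finset ℕ) × (Fin n → Finset ℕ))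
  | 0 => {x | x = (fun p => if p.val = 0 then {1} else ∅,
                   fun q => if q.val = 0 then {1} else ∅)}
  | k + 1 => {x | ∃ L P, (L, P) ∈ Uset m n k ∧ ∃ (f : Fin m → Fin m) (g : Fin n → Fin n),
      x = (vUnion (dotAct L f) (vUp L), vUnion P (vUp (dotAct P g)))}

/-- The `r`-Stirling number: partitions of `{1,…,a}` into `b` nonempty blocks
with `1,…,r` in pairwise distinct blocks. -/
noncomputable def rStirling (a b r : ℕ) : ℕ :=
  Set.ncard {C : Finset (Finset ℕ) |
    C.card = b ∧ (∅ ∉ C) ∧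
    (∀ B ∈ C, ∀ B' ∈ C, B ≠ B' → Disjoint B B') ∧
    C.sup id = Finset.Icc 1 a ∧
    ∀ x ∈ Finset.Icc 1 r, ∀ y ∈ Finset.Icc 1 r, x ≠ y →
      ∀ B ∈ C, x ∈ B → y ∉ B}

/-- The Stirling number of the second kind: the number of partitions of an
`a`-element set into `b` nonempty blocks. -/
noncomputable def stirling2 (a b : ℕ) : ℕ := rStirling a b 0

/-- The entry `s_n^{(i,j)}` (with `1 ≤ i,j ≤ n`). -/
noncomputable def sEntry (n i j : ℕ) : ℕ :=
  if i ≤ j then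
    (j - i).factorial * Nat.choose (n - i) (j - i) *
      ∑ α ∈ Finset.Icc (j - i) i, Nat.choose i α * i ^ (i - α) * stirling2 α (j - i)
  else 0

/-- The matrix `S_n`, with rows and columns indexed by `{1,…,n}`. -/
noncomputable def Smat (n : ℕ) : Matrix (Fin n) (Fin n) ℕ :=
  fun i j => sEntry n (i.val + 1) (j.val + 1)

/-- One step of the shuffle-automaton action on subsets of the grid. -/
def stepE {m n : ℕ} (E : Finset (Fin m × Fin n)) (f : Fin m → Fin m) (g : Fin n → Fin n) :
    Finset (Fin m × Fin n) :=
  E.image (fun p => (f p.1, p.2)) ∪ E.image (fun p => (p.1, g p.2))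

/-- Reachability from `{(0,0)}` by finitely many steps. -/
def Reach {m n : ℕ} (hm : 0 < m) (hn : 0 < n) (E : Finset (Fin m × Fin n)) : Prop :=
  Relation.ReflTransGen (fun E1 E2 => ∃ f g, E2 = stepE E1 f g)
    {(⟨0, hm⟩, ⟨0, hn⟩)} E

/-- Reachability from `{(0,0)}` in at most `t` steps. -/
def ReachIn {m n : ℕ} (hm : 0 < m) (hn : 0 < n) :
    ℕ → Finset (Fin m × Fin n) → Prop
  | 0, E => E = {(⟨0, hm⟩, ⟨0, hn⟩)}
  | t + 1, E => ReachIn hm hn t E ∨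
      ∃ E' f g, ReachIn hm hn t E' ∧ E = stepE E' f g

/-- `s(Λ,P) = {(i,j) : λ_i ∩ ρ_j ≠ ∅}`. -/
def sTab {m n : ℕ} (L : Fin m → Finset ℕ) (P : Fin n → Finset ℕ) :
    Finset (Fin m × Fin n) :=
  Finset.univ.filter (fun p => (L p.1 ∩ P p.2).Nonempty)


-- ===================== auxiliary development =====================
open Function

section PartitionTheory

def IsPart {γ : Type*} [DecidableEq γ] (S : Finset γ) (b : ℕ) (C : Finset (Finset γ)) : Prop :=
  C.card = b ∧ ∅ ∉ C ∧ (∀ B ∈ C, ∀ B' ∈ C, B ≠ B' → Disjoint B B') ∧ C.sup id = S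

instance {γ : Type*} [DecidableEq γ] (S : Finset γ) (b : ℕ) (C : Finset (Finset γ)) :
    Decidable (IsPart S b C) := by unfold IsPart; infer_instance

def PF (a b : ℕ) : Finset (Finset (Finset ℕ)) :=
  ((Finset.Icc 1 a).powerset.powerset).filter (fun C => IsPart (Finset.Icc 1 a) b C)

lemma stirling2_eq_PF (a b : ℕ) : stirling2 a b = (PF a b).card := by
  rw [stirling2, rStirling, ← Set.ncard_coe_finset]
  congr 1
  ext C
  simp only [Set.mem_setOf_eq, PF, coe_filter, Finset.mem_coe, Finset.mem_filter, mem_powerset, Set.mem_setOf_eq]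
  simp only [IsPart]
  constructor
  · rintro ⟨h1, h2, h3, h4, _⟩
    refine ⟨?_, h1, h2, h3, h4⟩
    intro B hB
    rw [mem_powerset, ← h4]
    exact le_sup (f := id) hB
  · rintro ⟨_, h1, h2, h3, h4⟩
    refine ⟨h1, h2, h3, h4, ?_⟩
    intro x hx
    simp at hx


lemma sup_image_image {γ δ : Type*} [DecidableEq γ] [DecidableEq δ] (f : γ → δ)
    (C : Finset (Finset γ)) : (C.image (Finset.image f)).sup id = (C.sup id).image f := by
  ext x
  simp only [Finset.mem_sup, Finset.mem_image, id]
  constructor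
  · rintro ⟨B', ⟨B, hB, rfl⟩, hx⟩
    rcases Finset.mem_image.mp hx with ⟨y, hy, rfl⟩
    exact ⟨y, ⟨B, hB, hy⟩, rfl⟩
  · rintro ⟨y, ⟨B, hB, hy⟩, rfl⟩
    exact ⟨B.image f, ⟨B, hB, rfl⟩, Finset.mem_image_of_mem f hy⟩

lemma isPart_image_iff {γ δ : Type*} [DecidableEq γ] [DecidableEq δ] {f : γ → δ}
    (hf : Function.Injective f) {S : Finset γ} {b : ℕ} {C : Finset (Finset γ)} :
    IsPart (S.image f) b (C.image (Finset.image f)) ↔ IsPart S b C := by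
  unfold IsPart
  have himg : Function.Injective (Finset.image f) := Finset.image_injective hf
  constructor
  · rintro ⟨h1, h2, h3, h4⟩
    refine ⟨?_, ?_, ?_, ?_⟩
    · rw [← h1, Finset.card_image_of_injective _ himg]
    · intro hc
      exact h2 (by simpa using Finset.mem_image_of_mem (Finset.image f) hc)
    · intro B hB B' hB' hne
      have := h3 (B.image f) (Finset.mem_image_of_mem _ hB) (B'.image f)
        (Finset.mem_image_of_mem _ hB') (fun h => hne (himg h))
      exact (Finset.disjoint_image hf).mp this
    · apply Finset.image_injective hf
      rw [← h4, sup_image_image]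
  · rintro ⟨h1, h2, h3, h4⟩
    refine ⟨?_, ?_, ?_, ?_⟩
    · rw [Finset.card_image_of_injective _ himg, h1]
    · intro hc
      rcases Finset.mem_image.mp hc with ⟨B, hB, hBe⟩
      rw [Finset.image_eq_empty] at hBe
      exact h2 (hBe ▸ hB)
    · rintro B1 hB1 B2 hB2 hne
      rcases Finset.mem_image.mp hB1 with ⟨B, hB, rfl⟩
      rcases Finset.mem_image.mp hB2 with ⟨B', hB', rfl⟩
      exact (Finset.disjoint_image hf).mpr (h3 B hB B' hB' (fun h => hne (h ▸ rfl)))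
    · rw [sup_image_image, h4]

/-- Number of partitions of a fintype into `b` nonempty blocks. -/
def Npart (γ : Type*) [DecidableEq γ] [Fintype γ] (b : ℕ) : ℕ :=
  (univ.filter (fun C : Finset (Finset γ) => IsPart (univ : Finset γ) b C)).card

lemma Npart_congr {γ δ : Type*} [DecidableEq γ] [Fintype γ] [DecidableEq δ] [Fintype δ]
    (e : γ ≃ δ) (b : ℕ) : Npart γ b = Npart δ b := by
  unfold Npart
  refine Finset.card_bij' (fun C _ => C.image (Finset.image e))
    (fun D _ => D.image (Finset.image e.symm)) ?_ ?_ ?_ ?_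
  · intro C hC
    simp only [mem_filter, mem_univ, true_and] at hC ⊢
    have : (univ : Finset δ) = (univ : Finset γ).image e := by
      ext x; simp [Finset.mem_image]
    rw [this]
    exact (isPart_image_iff e.injective).mpr hC
  · intro D hD
    simp only [mem_filter, mem_univ, true_and] at hD ⊢
    have : (univ : Finset γ) = (univ : Finset δ).image e.symm := by
      ext x; simp [Finset.mem_image]
    rw [this]
    exact (isPart_image_iff e.symm.injective).mpr hD
  · intro C _
    simp [Finset.image_image, Function.comp_def]
  · intro D _
    simp [Finset.image_image, Function.comp_def]


lemma univ_image_val (s : Finset ℕ) : (univ : Finset ↥s).image Subtype.val = s := by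
  rw [Finset.univ_eq_attach, Finset.attach_image_val]

lemma subtype_image_val {s : Finset ℕ} (B : Finset ↥s) :
    (Finset.subtype (· ∈ s) (B.image Subtype.val)) = B := by
  ext x
  simp [Finset.mem_subtype]

lemma image_val_subtype {s : Finset ℕ} {B : Finset ℕ} (hB : B ⊆ s) :
    (Finset.subtype (· ∈ s) B).image Subtype.val = B := by
  have := Finset.subtype_map (s := B) (· ∈ s)
  rw [Finset.map_eq_image] at this
  simpa [Finset.filter_true_of_mem (fun x hx => hB hx)] using this

lemma back_image {s : Finset ℕ} {D : Finset (Finset ℕ)} (hsub : D ⊆ s.powerset) :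
    (D.image (Finset.subtype (· ∈ s))).image (Finset.image Subtype.val) = D := by
  rw [Finset.image_image]
  rw [show ((Finset.image Subtype.val) ∘ (Finset.subtype (· ∈ s))) =
    fun B => (Finset.subtype (· ∈ s) B).image Subtype.val from rfl]
  rw [Finset.image_congr (g := id) ?_, Finset.image_id]
  intro B hB
  exact image_val_subtype (mem_powerset.mp (hsub hB))

lemma Npart_subtype (s : Finset ℕ) (b : ℕ) :
    Npart ↥s b = ((s.powerset.powerset).filter (fun C => IsPart s b C)).card := by
  unfold Npart
  refine Finset.card_bij' (fun C _ => C.image (Finset.image Subtype.val))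
    (fun D _ => D.image (Finset.subtype (· ∈ s))) ?_ ?_ ?_ ?_
  · intro C hC
    simp only [mem_filter, mem_univ, true_and] at hC
    have h2 : IsPart s b (C.image (Finset.image Subtype.val)) := by
      have := (isPart_image_iff (S := (univ : Finset ↥s)) Subtype.val_injective).mpr hC
      rwa [univ_image_val] at this
    simp only [mem_filter, mem_powerset]
    refine ⟨?_, h2⟩
    intro B hB
    rw [mem_powerset, ← h2.2.2.2]
    exact le_sup (f := id) hB
  · intro D hD
    simp only [mem_filter, mem_powerset] at hD
    obtain ⟨hsub, hD⟩ := hD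
    have hback := back_image hsub
    simp only [mem_filter, mem_univ, true_and]
    rw [← isPart_image_iff (f := (Subtype.val : ↥s → ℕ)) Subtype.val_injective, hback,
      univ_image_val]
    exact hD
  · intro C _
    rw [Finset.image_image]
    rw [show ((Finset.subtype (· ∈ s)) ∘ (Finset.image Subtype.val)) =
      fun B : Finset ↥s => Finset.subtype (· ∈ s) (B.image Subtype.val) from rfl]
    rw [Finset.image_congr (g := id) (fun B _ => subtype_image_val B), Finset.image_id]
  · intro D hD
    simp only [mem_filter, mem_powerset] at hD
    exact back_image hD.1

lemma Npart_eq_stirling2 (γ : Type*) [DecidableEq γ] [Fintype γ] (b : ℕ) :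
    Npart γ b = stirling2 (Fintype.card γ) b := by
  have hcard : Fintype.card γ = Fintype.card ↥(Finset.Icc 1 (Fintype.card γ)) := by
    rw [Fintype.card_coe, Nat.card_Icc]; omega
  rw [Npart_congr (Fintype.equivOfCardEq hcard) b, Npart_subtype, stirling2_eq_PF, PF]

lemma isPart_b_le {S : Finset ℕ} {b : ℕ} {C : Finset (Finset ℕ)} (h : IsPart S b C) :
    b ≤ S.card := by
  obtain ⟨h1, h2, h3, h4⟩ := h
  have hbu := Finset.card_biUnion (s := C) (t := id) (fun B hB B' hB' h => h3 B hB B' hB' h)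
  rw [← h4, Finset.sup_eq_biUnion, hbu]
  simp only [id]
  calc b = C.card := h1.symm
  _ = ∑ _B ∈ C, 1 := by simp
  _ ≤ ∑ B ∈ C, B.card := by
      apply Finset.sum_le_sum
      intro B hB
      exact Finset.card_pos.mpr (Finset.nonempty_iff_ne_empty.mpr (fun he => h2 (he ▸ hB)))

lemma stirling2_eq_zero {a b : ℕ} (h : a < b) : stirling2 a b = 0 := by
  rw [stirling2_eq_PF]
  rw [Finset.card_eq_zero]
  rw [Finset.eq_empty_iff_forall_notMem]
  intro C hC
  simp only [PF, mem_filter] at hC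
  have := isPart_b_le hC.2
  simp [Nat.card_Icc] at this
  omega


variable {γ δ : Type*} [DecidableEq γ] [Fintype γ] [DecidableEq δ] [Fintype δ]

def fibers (f : γ → δ) : Finset (Finset γ) :=
  univ.image (fun d => univ.filter (fun x => f x = d))

lemma fibers_isPart {f : γ → δ} (hf : Surjective f) :
    IsPart (univ : Finset γ) (Fintype.card δ) (fibers f) := by
  refine ⟨?_, ?_, ?_, ?_⟩
  · rw [fibers, Finset.card_image_of_injOn, Finset.card_univ]
    intro d _ d' _ h
    obtain ⟨x, hx⟩ := hf d
    dsimp only at h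
    have : x ∈ univ.filter (fun x => f x = d) := by simp [hx]
    rw [h] at this
    simp at this
    rw [← hx, this]
  · intro h
    rw [fibers, Finset.mem_image] at h
    obtain ⟨d, _, hd⟩ := h
    obtain ⟨x, hx⟩ := hf d
    have : x ∈ univ.filter (fun x => f x = d) := by simp [hx]
    rw [hd] at this
    simp at this
  · intro B hB B' hB' hne
    rw [fibers, Finset.mem_image] at hB hB'
    obtain ⟨d, _, rfl⟩ := hB
    obtain ⟨d', _, rfl⟩ := hB'
    rw [Finset.disjoint_left]
    intro x hx hx'
    simp at hx hx'
    exact hne (by rw [← hx, hx'])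
  · rw [Finset.eq_univ_iff_forall]
    intro x
    rw [Finset.mem_sup]
    exact ⟨univ.filter (fun y => f y = f x), by rw [fibers]; exact Finset.mem_image_of_mem _ (mem_univ _), by simp⟩

section PartCount

variable {C : Finset (Finset γ)} {b : ℕ}

lemma part_exists_unique (hC : IsPart (univ : Finset γ) b C) (x : γ) :
    ∃! B, B ∈ C ∧ x ∈ B := by
  obtain ⟨h1, h2, h3, h4⟩ := hC
  have : x ∈ C.sup id := h4 ▸ mem_univ x
  rw [Finset.mem_sup] at this
  obtain ⟨B, hB, hxB⟩ := this
  refine ⟨B, ⟨hB, hxB⟩, ?_⟩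
  rintro B' ⟨hB', hxB'⟩
  by_contra hne
  exact (Finset.disjoint_left.mp (h3 B' hB' B hB hne) hxB') hxB

noncomputable def blk (hC : IsPart (univ : Finset γ) b C) (x : γ) : Finset γ :=
  Finset.choose (fun B => x ∈ B) C (part_exists_unique hC x)

lemma blk_mem (hC : IsPart (univ : Finset γ) b C) (x : γ) : blk hC x ∈ C :=
  Finset.choose_mem _ _ _

lemma mem_blk (hC : IsPart (univ : Finset γ) b C) (x : γ) : x ∈ blk hC x :=
  Finset.choose_property (fun B => x ∈ B) C (part_exists_unique hC x)

lemma blk_eq (hC : IsPart (univ : Finset γ) b C) {x : γ} {B : Finset γ}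
    (hB : B ∈ C) (hx : x ∈ B) : blk hC x = B :=
  ExistsUnique.unique (part_exists_unique hC x) ⟨blk_mem hC x, mem_blk hC x⟩ ⟨hB, hx⟩

noncomputable def pick (hC : IsPart (univ : Finset γ) b C) (B : Finset γ) (hB : B ∈ C) : γ :=
  (Finset.nonempty_iff_ne_empty.mpr (fun he => hC.2.1 (he ▸ hB))).choose

lemma pick_mem (hC : IsPart (univ : Finset γ) b C) (B : Finset γ) (hB : B ∈ C) :
    pick hC B hB ∈ B :=
  (Finset.nonempty_iff_ne_empty.mpr (fun he => hC.2.1 (he ▸ hB))).choose_spec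

lemma fibers_eq_fact {f : γ → δ} (hff : fibers f = C) {x : γ} {B : Finset γ}
    (hB : B ∈ C) (hx : x ∈ B) : univ.filter (fun y => f y = f x) = B := by
  rw [← hff, fibers, Finset.mem_image] at hB
  obtain ⟨d, _, rfl⟩ := hB
  simp only [Finset.mem_filter, mem_univ, true_and] at hx
  rw [hx]

lemma fiber_const {C : Finset (Finset γ)} {f : γ → δ} (hff : fibers f = C) {B : Finset γ}
    (hB : B ∈ C) {u v : γ} (hu : u ∈ B) (hv : v ∈ B) : f u = f v := by
  have h1 := fibers_eq_fact hff hB hv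
  have hu' : u ∈ univ.filter (fun y => f y = f v) := h1.symm ▸ hu
  exact (Finset.mem_filter.mp hu').2

lemma card_fiber_count (hC : IsPart (univ : Finset γ) b C) (hb : b = Fintype.card δ) :
    ((univ.filter (fun f : γ → δ => Surjective f)).filter (fun f => fibers f = C)).card
      = (Fintype.card δ).factorial := by
  have hcC : Fintype.card ↥C = Fintype.card δ := by rw [Fintype.card_coe, hC.1, hb]
  have key : ((univ : Finset (↥C → δ)).filter (fun e => Injective e)).card
      = (Fintype.card δ).factorial := by
    rw [← Fintype.card_subtype]
    rw [Fintype.card_congr (Equiv.subtypeInjectiveEquivEmbedding ↥C δ)]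
    rw [Fintype.card_embedding_eq, hcC, Nat.descFactorial_self]
  rw [← key]
  refine Finset.card_bij' (fun f _ => fun B : ↥C => f (pick hC B.1 B.2))
    (fun e _ => fun x => e ⟨blk hC x, blk_mem hC x⟩) ?_ ?_ ?_ ?_
  · -- i maps into injective e
    intro f hf
    simp only [Finset.mem_filter, mem_univ, true_and] at hf ⊢
    obtain ⟨hsurj, hfib⟩ := hf
    intro B B' h
    dsimp at h
    have h1 := fibers_eq_fact hfib B.2 (pick_mem hC B.1 B.2)
    have h2 := fibers_eq_fact hfib B'.2 (pick_mem hC B'.1 B'.2)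
    rw [h] at h1
    exact Subtype.ext (by rw [← h1]; exact h2)
  · -- j maps into surjective with fibers = C
    intro e he
    simp only [Finset.mem_filter, mem_univ, true_and] at he ⊢
    have hbij : Bijective e := (Fintype.bijective_iff_injective_and_card e).mpr ⟨he, hcC⟩
    constructor
    · intro d
      obtain ⟨B, hB⟩ := hbij.2 d
      refine ⟨pick hC B.1 B.2, ?_⟩
      have h2 : (⟨blk hC (pick hC B.1 B.2), blk_mem hC _⟩ : ↥C) = B :=
        Subtype.ext (blk_eq hC B.2 (pick_mem hC B.1 B.2))
      exact (congrArg e h2).trans hB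
    · ext F
      rw [fibers, Finset.mem_image]
      constructor
      · rintro ⟨d, _, rfl⟩
        obtain ⟨B, hB⟩ := hbij.2 d
        have : univ.filter (fun x => e ⟨blk hC x, blk_mem hC x⟩ = d) = B.1 := by
          ext x
          simp only [Finset.mem_filter, mem_univ, true_and]
          constructor
          · intro hx
            rw [← hB] at hx
            have := hbij.1 hx
            rw [← Subtype.ext_iff.mp this]
            exact mem_blk hC x
          · intro hx
            exact (congrArg e (Subtype.ext (blk_eq hC B.2 hx))).trans hB
        rw [this]
        exact B.2
      · intro hF
        refine ⟨e ⟨F, hF⟩, mem_univ _, ?_⟩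
        ext x
        simp only [Finset.mem_filter, mem_univ, true_and]
        constructor
        · intro hx
          have := hbij.1 hx
          have h2 := Subtype.ext_iff.mp this
          dsimp at h2
          rw [← h2]
          exact mem_blk hC x
        · intro hx
          exact congrArg e (Subtype.ext (blk_eq hC hF hx))
  · -- left inverse
    intro f hf
    simp only [Finset.mem_filter, mem_univ, true_and] at hf
    funext x
    dsimp
    exact fiber_const hf.2 (blk_mem hC x) (pick_mem hC (blk hC x) (blk_mem hC x))
      (mem_blk hC x)
  · -- right inverse
    intro e he
    funext B
    dsimp
    exact congrArg e (Subtype.ext (blk_eq hC B.2 (pick_mem hC B.1 B.2)))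

end PartCount

lemma card_surjective_eq (γ δ : Type*) [DecidableEq γ] [Fintype γ] [DecidableEq δ] [Fintype δ] :
    ((univ : Finset (γ → δ)).filter (fun f => Surjective f)).card
      = (Fintype.card δ).factorial * Npart γ (Fintype.card δ) := by
  rw [Finset.card_eq_sum_card_fiberwise (f := fibers)
    (t := univ.filter (fun C => IsPart (univ : Finset γ) (Fintype.card δ) C)) ?_]
  · rw [Finset.sum_congr rfl (fun C hC => ?_), Finset.sum_const, Npart, smul_eq_mul,
      Nat.mul_comm]
    · simp only [Finset.mem_filter, mem_univ, true_and] at hC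
      exact card_fiber_count hC rfl
  · intro f hf
    simp only [Finset.mem_coe, Finset.mem_filter, mem_univ, true_and] at hf ⊢
    exact fibers_isPart hf


lemma surj_count {γ δ : Type*} [DecidableEq γ] [Fintype γ] [DecidableEq δ] [Fintype δ] :
    ((univ : Finset (γ → δ)).filter (fun f => Surjective f)).card
      = (Fintype.card δ).factorial * stirling2 (Fintype.card γ) (Fintype.card δ) := by
  rw [card_surjective_eq, Npart_eq_stirling2]

end PartitionTheory

section FunctionCounting

variable {n : ℕ}

lemma per_T_count (A B : Finset (Fin n)) (hAB : Disjoint A B) (T : Finset ↥A) :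
    ((univ : Finset (↥A → Fin n)).filter
      (fun h => univ.image h \ A = B ∧ univ.filter (fun a => h a ∈ B) = T)).card
    = ((univ : Finset (↥T → ↥B)).filter (fun f => Surjective f)).card
      * A.card ^ (Tᶜ.card) := by
  have h2 : A.card ^ (Tᶜ.card : ℕ) = (univ : Finset (↥(Tᶜ : Finset ↥A) → ↥A)).card := by
    rw [Finset.card_univ, Fintype.card_fun, Fintype.card_coe, Fintype.card_coe]
  rw [h2, ← Finset.card_product]
  have hTc : ∀ (t : ↥A), t ∉ T → t ∈ Tᶜ := fun t ht => Finset.mem_compl.mpr ht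
  refine Finset.card_bij'
    (fun h hh => (⟨fun t => ⟨h t.1, ?_⟩, fun t => ⟨h t.1, ?_⟩⟩ :
      (↥T → ↥B) × (↥(Tᶜ : Finset ↥A) → ↥A)))
    (fun p _ => fun a => if ha : a ∈ T then (p.1 ⟨a, ha⟩).1 else (p.2 ⟨a, hTc a ha⟩).1)
    ?_ ?_ ?_ ?_
  · -- h t.1 ∈ B for t ∈ T
    simp only [Finset.mem_filter, mem_univ, true_and] at hh
    obtain ⟨a, hat⟩ := t
    have h3 : a ∈ filter (fun a => h a ∈ B) univ := by rw [hh.2]; exact hat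
    simpa using h3
  · -- h t.1 ∈ A for t ∈ Tᶜ
    simp only [Finset.mem_filter, mem_univ, true_and] at hh
    obtain ⟨a, hat⟩ := t
    have ht : a ∉ T := Finset.mem_compl.mp hat
    by_contra hA
    have himg : h a ∈ univ.image h \ A := by
      simp only [Finset.mem_sdiff, Finset.mem_image]
      exact ⟨⟨a, mem_univ _, rfl⟩, hA⟩
    rw [hh.1] at himg
    apply ht
    have h3 : a ∈ filter (fun a => h a ∈ B) univ := by simp [himg]
    rw [hh.2] at h3
    exact h3
  · -- i maps into product
    intro h hh
    simp only [Finset.mem_filter, mem_univ, true_and] at hh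
    simp only [Finset.mem_product, Finset.mem_filter, mem_univ, true_and, and_true]
    intro b
    have hb : (b : Fin n) ∈ univ.image h \ A := hh.1 ▸ b.2
    simp only [Finset.mem_sdiff, Finset.mem_image, mem_univ, true_and] at hb
    obtain ⟨⟨a, ha⟩, _⟩ := hb
    have haT : a ∈ T := by
      rw [← hh.2]
      simp only [Finset.mem_filter, mem_univ, true_and]
      rw [ha]; exact b.2
    exact ⟨⟨a, haT⟩, Subtype.ext ha⟩
  · -- j maps into filter
    intro p hp
    have hsurj : Surjective p.1 :=
      (Finset.mem_filter.mp (Finset.mem_product.mp hp).1).2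
    simp only [Finset.mem_filter, mem_univ, true_and]
    constructor
    · ext x
      simp only [Finset.mem_sdiff, Finset.mem_image, mem_univ, true_and]
      constructor
      · rintro ⟨⟨a, rfl⟩, hxA⟩
        by_cases ha : a ∈ T
        · simp only [ha, dif_pos]
          exact (p.1 ⟨a, ha⟩).2
        · exfalso
          apply hxA
          simp only [ha, dif_neg, not_false_iff]
          exact (p.2 ⟨a, hTc a ha⟩).2
      · intro hx
        obtain ⟨t, ht⟩ := hsurj ⟨x, hx⟩
        refine ⟨⟨t.1, ?_⟩, Finset.disjoint_right.mp hAB hx⟩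
        rw [dif_pos t.2]
        simp only [Subtype.coe_eta]
        exact congrArg Subtype.val ht
    · ext a
      simp only [Finset.mem_filter, mem_univ, true_and]
      constructor
      · intro hmem
        by_contra ha
        rw [dif_neg ha] at hmem
        exact Finset.disjoint_left.mp hAB (p.2 ⟨a, hTc a ha⟩).2 hmem
      · intro ha
        rw [dif_pos ha]
        exact (p.1 ⟨a, ha⟩).2
  · -- left inverse
    intro h _
    funext a
    by_cases ha : a ∈ T <;> simp [ha]
  · -- right inverse
    intro p _
    refine Prod.ext ?_ ?_
    · funext t
      apply Subtype.ext
      dsimp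
      rw [dif_pos t.2]
    · funext t
      apply Subtype.ext
      dsimp
      rw [dif_neg (Finset.mem_compl.mp t.2)]


lemma per_B_count (A B : Finset (Fin n)) (hAB : Disjoint A B) :
    ((univ : Finset (↥A → Fin n)).filter (fun h => univ.image h \ A = B)).card
      = ∑ α ∈ Finset.range (A.card + 1),
          (A.card.choose α) * ((B.card).factorial * stirling2 α B.card)
            * A.card ^ (A.card - α) := by
  rw [Finset.card_eq_sum_card_fiberwise
    (f := fun h => univ.filter (fun a => h a ∈ B)) (t := (univ : Finset (Finset ↥A)))
    (fun h _ => mem_univ _)]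
  have huniv : (univ : Finset (Finset ↥A)) = (univ : Finset ↥A).powerset :=
    Finset.powerset_univ.symm
  rw [huniv, Finset.sum_powerset]
  rw [Finset.card_univ, Fintype.card_coe]
  refine Finset.sum_congr rfl (fun α hα => ?_)
  have hinner : ∀ T ∈ Finset.powersetCard α (univ : Finset ↥A),
      ((univ.filter (fun h : ↥A → Fin n => univ.image h \ A = B)).filter
        (fun h => univ.filter (fun a => h a ∈ B) = T)).card
      = ((B.card).factorial * stirling2 α B.card) * A.card ^ (A.card - α) := by
    intro T hT
    rw [Finset.mem_powersetCard] at hT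
    rw [Finset.filter_filter]
    rw [per_T_count A B hAB T]
    rw [surj_count, Fintype.card_coe, Fintype.card_coe, hT.2]
    congr 1
    rw [Finset.card_compl, Fintype.card_coe, hT.2]
  rw [Finset.sum_congr rfl hinner, Finset.sum_const, Finset.card_powersetCard,
    Finset.card_univ, Fintype.card_coe, smul_eq_mul, ← Nat.mul_assoc]

lemma Nfun_eq (A : Finset (Fin n)) (j : ℕ) :
    ((univ : Finset (↥A → Fin n)).filter
      (fun h => (A ∪ univ.image h).card = j)).card = sEntry n A.card j := by
  set i := A.card with hi
  by_cases hij : i ≤ j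
  · have hcond : ∀ h : ↥A → Fin n, ((A ∪ univ.image h).card = j)
        ↔ (univ.image h \ A).card = j - i := by
      intro h
      have hc := Finset.card_sdiff_add_card (univ.image h) A
      rw [Finset.union_comm] at hc
      omega
    rw [Finset.filter_congr (fun h _ => hcond h)]
    rw [Finset.card_eq_sum_card_fiberwise
      (f := fun h => univ.image h \ A) (t := Finset.powersetCard (j - i) Aᶜ) ?_]
    · have hinner : ∀ B ∈ Finset.powersetCard (j - i) Aᶜ,
          ((univ.filter (fun h : ↥A → Fin n => (univ.image h \ A).card = j - i)).filter
            (fun h => univ.image h \ A = B)).card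
          = ∑ α ∈ Finset.range (i + 1),
              (i.choose α) * ((j - i).factorial * stirling2 α (j - i)) * i ^ (i - α) := by
        intro B hB
        rw [Finset.mem_powersetCard] at hB
        have hd : Disjoint A B := by
          rw [Finset.disjoint_right]
          intro x hx
          exact Finset.mem_compl.mp (hB.1 hx)
        rw [Finset.filter_filter]
        have : ∀ h : ↥A → Fin n,
            ((univ.image h \ A).card = j - i ∧ univ.image h \ A = B) ↔
              univ.image h \ A = B := by
          intro h
          constructor
          · exact fun hh => hh.2
          · intro hh
            exact ⟨by rw [hh, hB.2], hh⟩
        rw [Finset.filter_congr (fun h _ => this h)]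
        rw [per_B_count A B hd, hB.2]
      rw [Finset.sum_congr rfl hinner, Finset.sum_const, Finset.card_powersetCard,
        Finset.card_compl, Fintype.card_fin, smul_eq_mul]
      rw [sEntry, if_pos hij]
      -- now pure arithmetic rearrangement
      have hsum : ∑ α ∈ Finset.range (i + 1),
          (i.choose α) * ((j - i).factorial * stirling2 α (j - i)) * i ^ (i - α)
        = (j - i).factorial *
            ∑ α ∈ Finset.Icc (j - i) i, i.choose α * i ^ (i - α) * stirling2 α (j - i) := by
        rw [Finset.mul_sum]
        rw [← Finset.sum_subset (s₁ := Finset.Icc (j - i) i) (s₂ := Finset.range (i + 1))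
          ?_ ?_]
        · refine Finset.sum_congr rfl (fun α _ => ?_)
          ring
        · intro α hα
          rw [Finset.mem_Icc] at hα
          rw [Finset.mem_range]
          omega
        · intro α hα hα2
          rw [Finset.mem_range] at hα
          rw [Finset.mem_Icc] at hα2
          have : α < j - i := by omega
          rw [stirling2_eq_zero this]
          ring
      rw [hsum]
      ring
    · intro h hh
      rw [Finset.mem_coe, Finset.mem_filter] at hh
      rw [Finset.mem_coe, Finset.mem_powersetCard]
      exact ⟨fun x hx => Finset.mem_compl.mpr (Finset.mem_sdiff.mp hx).2, hh.2⟩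
  · rw [sEntry, if_neg hij]
    rw [Finset.card_eq_zero, Finset.filter_eq_empty_iff]
    intro h _
    have : A.card ≤ (A ∪ univ.image h).card :=
      Finset.card_le_card Finset.subset_union_left
    omega


end FunctionCounting

section Structure1

variable {n : ℕ}

/-- `Φ(P,g)`. -/
def Phi {n : ℕ} (P : Fin n → Finset ℕ) (g : Fin n → Fin n) : Fin n → Finset ℕ :=
  vUnion P (vUp (dotAct P g))

lemma mem_dotAct {P : Fin n → Finset ℕ} {g : Fin n → Fin n} {q : Fin n} {x : ℕ} :
    x ∈ dotAct P g q ↔ ∃ p, g p = q ∧ x ∈ P p := by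
  simp [dotAct, Finset.mem_biUnion]

lemma mem_sup_iff {P : Fin n → Finset ℕ} {x : ℕ} :
    x ∈ Finset.univ.sup P ↔ ∃ q, x ∈ P q := by
  rw [Finset.mem_sup]
  simp

lemma vMax_eq {k : ℕ} {P : Fin n → Finset ℕ} (h : Finset.univ.sup P = Finset.Icc 1 (2 ^ k)) :
    vMax P = 2 ^ k := by
  rw [vMax, h]
  apply le_antisymm
  · apply Finset.sup_le
    intro x hx
    exact (Finset.mem_Icc.mp hx).2
  · exact Finset.le_sup (f := id) (Finset.mem_Icc.mpr ⟨Nat.one_le_two_pow, le_refl _⟩)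

lemma sup_dotAct {P : Fin n → Finset ℕ} (g : Fin n → Fin n) :
    Finset.univ.sup (dotAct P g) = Finset.univ.sup P := by
  ext x
  rw [mem_sup_iff, mem_sup_iff]
  constructor
  · rintro ⟨q', hq'⟩
    obtain ⟨p, _, hp⟩ := mem_dotAct.mp hq'
    exact ⟨p, hp⟩
  · rintro ⟨p, hp⟩
    exact ⟨g p, mem_dotAct.mpr ⟨p, rfl, hp⟩⟩

lemma vMax_dotAct {k : ℕ} {P : Fin n → Finset ℕ}
    (hsup : Finset.univ.sup P = Finset.Icc 1 (2 ^ k)) (g : Fin n → Fin n) :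
    vMax (dotAct P g) = 2 ^ k := by
  apply vMax_eq
  rw [sup_dotAct, hsup]

lemma mem_Phi {k : ℕ} {P : Fin n → Finset ℕ} (hsup : Finset.univ.sup P = Finset.Icc 1 (2 ^ k))
    {g : Fin n → Fin n} {q : Fin n} {z : ℕ} :
    z ∈ Phi P g q ↔ z ∈ P q ∨ ∃ y, (∃ p, g p = q ∧ y ∈ P p) ∧ z = y + 2 ^ k := by
  rw [Phi, vUnion]
  rw [Finset.mem_union]
  constructor
  · rintro (h | h)
    · exact Or.inl h
    · right
      rw [vUp] at h
      rcases Finset.mem_image.mp h with ⟨y, hy, rfl⟩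
      exact ⟨y, mem_dotAct.mp hy, by rw [vMax_dotAct hsup]⟩
  · rintro (h | ⟨y, hy, rfl⟩)
    · exact Or.inl h
    · right
      rw [vUp, Finset.mem_image]
      exact ⟨y, mem_dotAct.mpr hy, by rw [vMax_dotAct hsup]⟩

lemma mem_bound {k : ℕ} {P : Fin n → Finset ℕ}
    (hsup : Finset.univ.sup P = Finset.Icc 1 (2 ^ k)) {q : Fin n} {x : ℕ} (hx : x ∈ P q) :
    1 ≤ x ∧ x ≤ 2 ^ k := by
  have : x ∈ Finset.univ.sup P := mem_sup_iff.mpr ⟨q, hx⟩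
  rw [hsup, Finset.mem_Icc] at this
  exact this

lemma isRvalid_Phi {k : ℕ} {P : Fin n → Finset ℕ} (hP : IsRvalid k P) (g : Fin n → Fin n) :
    IsRvalid (k + 1) (Phi P g) := by
  obtain ⟨⟨hdis, hsup⟩, hone, hcond⟩ := hP
  have hmem := fun {q x} hx => mem_Phi (q := q) (z := x) hsup (g := g) |>.mp hx
  have hmem' := fun {q x} hx => mem_Phi (q := q) (z := x) hsup (g := g) |>.mpr hx
  refine ⟨⟨?_, ?_⟩, ?_, ?_⟩
  · -- pairwise disjoint
    intro p q hpq
    rw [Finset.disjoint_left]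
    intro z hzp hzq
    rcases hmem hzp with hz1 | ⟨y, ⟨p', hgp', hyp'⟩, rfl⟩
    · rcases hmem hzq with hz2 | ⟨y, ⟨q', hgq', hyq'⟩, hze⟩
      · exact Finset.disjoint_left.mp (hdis p q hpq) hz1 hz2
      · have b1 := mem_bound hsup hz1
        have b2 := mem_bound hsup hyq'
        omega
    · rcases hmem hzq with hz2 | ⟨y', ⟨q', hgq', hyq'⟩, hze⟩
      · have b1 := mem_bound hsup hz2
        have b2 := mem_bound hsup hyp'
        omega
      · have hyy : y = y' := by omega
        subst hyy
        have hpq' : p' = q' := by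
          by_contra hne
          exact Finset.disjoint_left.mp (hdis p' q' hne) hyp' hyq'
        exact hpq (by rw [← hgp', ← hgq', hpq'])
  · -- sup = Icc 1 (2^(k+1))
    ext z
    rw [mem_sup_iff, Finset.mem_Icc]
    constructor
    · rintro ⟨q, hq⟩
      rcases hmem hq with hz | ⟨y, _, rfl⟩
      · have := mem_bound hsup hz
        have : (2:ℕ) ^ k ≤ 2 ^ (k+1) := Nat.pow_le_pow_right (by norm_num) (by omega)
        omega
      · have := mem_bound hsup (by exact ((‹∃ p, g p = _ ∧ y ∈ P p›).choose_spec).2)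
        rw [pow_succ]
        omega
    · rintro ⟨h1, h2⟩
      by_cases hz : z ≤ 2 ^ k
      · have : z ∈ Finset.univ.sup P := by
          rw [hsup, Finset.mem_Icc]; exact ⟨h1, hz⟩
        obtain ⟨q, hq⟩ := mem_sup_iff.mp this
        exact ⟨q, hmem' (Or.inl hq)⟩
      · have hy : z - 2 ^ k ∈ Finset.univ.sup P := by
          rw [hsup, Finset.mem_Icc, pow_succ] at *
          omega
        obtain ⟨p, hp⟩ := mem_sup_iff.mp hy
        refine ⟨g p, hmem' (Or.inr ⟨z - 2 ^ k, ⟨p, rfl, hp⟩, by omega⟩)⟩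
  · -- 1 ∈ entry 0
    intro p hp
    exact hmem' (Or.inl (hone p hp))
  · -- propagation condition
    intro k' hk' i hi j hj ⟨α, hiα, hjα⟩
    rw [Finset.mem_Icc] at hi hj
    have h2k : (2:ℕ) ^ k' ≤ 2 ^ k := Nat.pow_le_pow_right (by norm_num) (by omega)
    have hiP : i ∈ P α := by
      rcases hmem hiα with h | ⟨y, ⟨p', _, hyp'⟩, rfl⟩
      · exact h
      · have := mem_bound hsup hyp'
        omega
    have hjP : j ∈ P α := by
      rcases hmem hjα with h | ⟨y, ⟨p', _, hyp'⟩, rfl⟩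
      · exact h
      · have := mem_bound hsup hyp'
        omega
    by_cases hkk : k' = k
    · subst hkk
      exact ⟨g α, hmem' (Or.inr ⟨i, ⟨α, rfl, hiP⟩, rfl⟩),
             hmem' (Or.inr ⟨j, ⟨α, rfl, hjP⟩, rfl⟩)⟩
    · have hk'k : k' < k := by omega
      obtain ⟨β, hb1, hb2⟩ := hcond k' hk'k i (Finset.mem_Icc.mpr hi) j (Finset.mem_Icc.mpr hj)
        ⟨α, hiP, hjP⟩
      exact ⟨β, hmem' (Or.inl hb1), hmem' (Or.inl hb2)⟩

/-- Restriction to the bottom half. -/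
def restrictV {n : ℕ} (k : ℕ) (Pi : Fin n → Finset ℕ) : Fin n → Finset ℕ :=
  fun q => Pi q ∩ Finset.Icc 1 (2 ^ k)

lemma restrict_Phi {k : ℕ} {P : Fin n → Finset ℕ}
    (hsup : Finset.univ.sup P = Finset.Icc 1 (2 ^ k)) (g : Fin n → Fin n) :
    restrictV k (Phi P g) = P := by
  funext q
  ext x
  rw [restrictV, Finset.mem_inter, Finset.mem_Icc]
  constructor
  · rintro ⟨hx, h1, h2⟩
    rcases (mem_Phi hsup).mp hx with h | ⟨y, ⟨p', _, hyp'⟩, rfl⟩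
    · exact h
    · have := mem_bound hsup hyp'
      omega
  · intro hx
    have := mem_bound hsup hx
    exact ⟨(mem_Phi hsup).mpr (Or.inl hx), this.1, this.2⟩

lemma decompose {k : ℕ} {Pi : Fin n → Finset ℕ} (hPi : IsRvalid (k + 1) Pi) :
    IsRvalid k (restrictV k Pi) ∧ ∃ g, Pi = Phi (restrictV k Pi) g := by
  obtain ⟨⟨hdis, hsup⟩, hone, hcond⟩ := hPi
  set P := restrictV k Pi with hPdef
  have hPmem : ∀ {q x}, x ∈ P q ↔ x ∈ Pi q ∧ 1 ≤ x ∧ x ≤ 2 ^ k := by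
    intro q x
    rw [hPdef, restrictV, Finset.mem_inter, Finset.mem_Icc]
  have h2k : (2:ℕ) ^ k ≤ 2 ^ (k + 1) := Nat.pow_le_pow_right (by norm_num) (by omega)
  have hsup' : Finset.univ.sup P = Finset.Icc 1 (2 ^ k) := by
    ext x
    rw [mem_sup_iff, Finset.mem_Icc]
    constructor
    · rintro ⟨q, hq⟩
      exact (hPmem.mp hq).2
    · rintro ⟨h1, h2⟩
      have : x ∈ Finset.univ.sup Pi := by
        rw [hsup, Finset.mem_Icc]
        omega
      obtain ⟨q, hq⟩ := mem_sup_iff.mp this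
      exact ⟨q, hPmem.mpr ⟨hq, h1, h2⟩⟩
  have hPvalid : IsRvalid k P := by
    refine ⟨⟨?_, hsup'⟩, ?_, ?_⟩
    · intro p q hpq
      exact Finset.disjoint_of_subset_left Finset.inter_subset_left
        (Finset.disjoint_of_subset_right Finset.inter_subset_left (hdis p q hpq))
    · intro p hp
      exact hPmem.mpr ⟨hone p hp, le_refl 1, Nat.one_le_two_pow⟩
    · intro k' hk' i hi j hj ⟨α, hiα, hjα⟩
      rw [Finset.mem_Icc] at hi hj
      have hp2 : (2:ℕ) ^ (k' + 1) ≤ 2 ^ k := Nat.pow_le_pow_right (by norm_num) (by omega)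
      rw [pow_succ] at hp2
      obtain ⟨β, hb1, hb2⟩ := hcond k' (by omega) i (Finset.mem_Icc.mpr hi) j
        (Finset.mem_Icc.mpr hj) ⟨α, (hPmem.mp hiα).1, (hPmem.mp hjα).1⟩
      exact ⟨β, hPmem.mpr ⟨hb1, by omega, by omega⟩, hPmem.mpr ⟨hb2, by omega, by omega⟩⟩
  refine ⟨hPvalid, ?_⟩
  have hβ : ∀ q : Fin n, ∃ β, ∀ y ∈ P q, y + 2 ^ k ∈ Pi β := by
    intro q
    by_cases hq : (P q).Nonempty
    · obtain ⟨x, hx⟩ := hq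
      have hxb := hPmem.mp hx
      have hx2 : x + 2 ^ k ∈ Finset.univ.sup Pi := by
        rw [hsup, Finset.mem_Icc, pow_succ]
        omega
      obtain ⟨β0, hβ0⟩ := mem_sup_iff.mp hx2
      refine ⟨β0, fun y hy => ?_⟩
      have hyb := hPmem.mp hy
      obtain ⟨β', h1, h2⟩ := hcond k (by omega) y (Finset.mem_Icc.mpr ⟨hyb.2.1, hyb.2.2⟩)
        x (Finset.mem_Icc.mpr ⟨hxb.2.1, hxb.2.2⟩) ⟨q, hyb.1, hxb.1⟩
      have hββ : β' = β0 := by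
        by_contra hne
        exact Finset.disjoint_left.mp (hdis β' β0 hne) h2 hβ0
      exact hββ ▸ h1
    · exact ⟨q, fun y hy => absurd ⟨y, hy⟩ hq⟩
  choose g hg using hβ
  refine ⟨g, ?_⟩
  funext q
  ext z
  constructor
  · intro hz
    have hzb : z ∈ Finset.univ.sup Pi := mem_sup_iff.mpr ⟨q, hz⟩
    rw [hsup, Finset.mem_Icc] at hzb
    by_cases hz2 : z ≤ 2 ^ k
    · exact (mem_Phi hsup').mpr (Or.inl (hPmem.mpr ⟨hz, hzb.1, hz2⟩))
    · have hy : z - 2 ^ k ∈ Finset.univ.sup P := by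
        rw [hsup', Finset.mem_Icc]
        rw [pow_succ] at hzb
        omega
      obtain ⟨p, hp⟩ := mem_sup_iff.mp hy
      have hzp : z ∈ Pi (g p) := by
        have := hg p (z - 2 ^ k) hp
        have hze : z - 2 ^ k + 2 ^ k = z := by omega
        rwa [hze] at this
      have hq : g p = q := by
        by_contra hne
        exact Finset.disjoint_left.mp (hdis (g p) q hne) hzp hz
      exact (mem_Phi hsup').mpr (Or.inr ⟨z - 2 ^ k, ⟨p, hq, hp⟩, by omega⟩)
  · intro hz
    rcases (mem_Phi hsup').mp hz with h | ⟨y, ⟨p, hgp, hyp⟩, rfl⟩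
    · exact (hPmem.mp h).1
    · exact hgp ▸ hg p y hyp

lemma Phi_P_eq {k : ℕ} {P P' : Fin n → Finset ℕ} {g g' : Fin n → Fin n}
    (hsup : Finset.univ.sup P = Finset.Icc 1 (2 ^ k))
    (hsup' : Finset.univ.sup P' = Finset.Icc 1 (2 ^ k))
    (h : Phi P g = Phi P' g') : P = P' := by
  rw [← restrict_Phi hsup g, h, restrict_Phi hsup' g']

lemma Phi_congr {P : Fin n → Finset ℕ} {g g' : Fin n → Fin n}
    (h : ∀ p, P p ≠ ∅ → g p = g' p) : Phi P g = Phi P g' := by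
  have hD : dotAct P g = dotAct P g' := by
    funext q
    ext x
    rw [mem_dotAct, mem_dotAct]
    constructor
    · rintro ⟨p, rfl, hx⟩
      exact ⟨p, (h p (fun he => by simp [he] at hx)).symm, hx⟩
    · rintro ⟨p, rfl, hx⟩
      exact ⟨p, h p (fun he => by simp [he] at hx), hx⟩
  rw [Phi, hD, ← Phi]

lemma Phi_g_eq {k : ℕ} {P : Fin n → Finset ℕ} {g g' : Fin n → Fin n}
    (hP : IsRvalid k P) (h : Phi P g = Phi P g') {p : Fin n} (hp : P p ≠ ∅) :
    g p = g' p := by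
  obtain ⟨x, hx⟩ := Finset.nonempty_iff_ne_empty.mpr hp
  have hz1 : x + 2 ^ k ∈ Phi P g (g p) :=
    (mem_Phi hP.1.2).mpr (Or.inr ⟨x, ⟨p, rfl, hx⟩, rfl⟩)
  have hz2 : x + 2 ^ k ∈ Phi P g' (g' p) :=
    (mem_Phi hP.1.2).mpr (Or.inr ⟨x, ⟨p, rfl, hx⟩, rfl⟩)
  rw [h] at hz1
  by_contra hne
  exact Finset.disjoint_left.mp ((isRvalid_Phi hP g').1.1 _ _ hne) hz1 hz2

lemma nne_Phi {k : ℕ} {P : Fin n → Finset ℕ}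
    (hsup : Finset.univ.sup P = Finset.Icc 1 (2 ^ k)) (g : Fin n → Fin n) :
    nne (Phi P g)
      = ((Finset.univ.filter (fun q => P q ≠ ∅))
          ∪ (Finset.univ.filter (fun q => P q ≠ ∅)).image g).card := by
  rw [nne]
  congr 1
  ext q
  simp only [Finset.mem_filter, mem_univ, true_and, Finset.mem_union, Finset.mem_image]
  rw [← Finset.nonempty_iff_ne_empty]
  constructor
  · rintro ⟨z, hz⟩
    rcases (mem_Phi hsup).mp hz with h | ⟨y, ⟨p, hgp, hyp⟩, rfl⟩
    · exact Or.inl (fun he => by simp [he] at h)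
    · exact Or.inr ⟨p, fun he => by simp [he] at hyp, hgp⟩
  · rintro (h | ⟨p, hp, rfl⟩)
    · obtain ⟨x, hx⟩ := Finset.nonempty_iff_ne_empty.mpr h
      exact ⟨x, (mem_Phi hsup).mpr (Or.inl hx)⟩
    · obtain ⟨x, hx⟩ := Finset.nonempty_iff_ne_empty.mpr hp
      exact ⟨x + 2 ^ k, (mem_Phi hsup).mpr (Or.inr ⟨x, ⟨p, rfl, hx⟩, rfl⟩)⟩


end Structure1

section Assembly

instance {n k : ℕ} (ρ : Fin n → Finset ℕ) : Decidable (IsRvalid k ρ) := by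
  unfold IsRvalid IsEXP; infer_instance

def RVfin (n k : ℕ) : Finset (Fin n → Finset ℕ) :=
  (Fintype.piFinset (fun _ : Fin n => (Finset.Icc 1 (2 ^ k)).powerset)).filter
    (fun ρ => IsRvalid k ρ)

lemma mem_RVfin {n k : ℕ} {ρ : Fin n → Finset ℕ} : ρ ∈ RVfin n k ↔ IsRvalid k ρ := by
  rw [RVfin, Finset.mem_filter]
  constructor
  · exact fun h => h.2
  · intro h
    refine ⟨Fintype.mem_piFinset.mpr (fun q => ?_), h⟩
    rw [Finset.mem_powerset, ← h.1.2]
    exact Finset.le_sup (f := fun q => ρ q) (Finset.mem_univ q)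

lemma per_P_card {n k : ℕ} {P : Fin n → Finset ℕ} (hP : IsRvalid k P) (j : ℕ) :
    (((univ : Finset (Fin n → Fin n)).image (fun g => Phi P g)).filter
      (fun Pi => nne Pi = j)).card = sEntry n (nne P) j := by
  set A := Finset.univ.filter (fun q => P q ≠ ∅) with hA
  have hcard : nne P = A.card := rfl
  rw [hcard, ← Nfun_eq A j]
  have hmemA : ∀ {p : Fin n}, p ∈ A ↔ P p ≠ ∅ := by
    intro p; rw [hA, Finset.mem_filter]; simp
  -- extension of h : ↥A → Fin n to Fin n → Fin n
  set ext : (↥A → Fin n) → (Fin n → Fin n) :=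
    fun h p => if hp : p ∈ A then h ⟨p, hp⟩ else p with hext
  have himg : ∀ h : ↥A → Fin n, A.image (ext h) = univ.image h := by
    intro h
    ext q
    simp only [Finset.mem_image, Finset.mem_univ, true_and]
    constructor
    · rintro ⟨p, hp, rfl⟩
      exact ⟨⟨p, hp⟩, by rw [hext]; simp [hp]⟩
    · rintro ⟨a, rfl⟩
      exact ⟨a.1, a.2, by rw [hext]; simp [a.2]⟩
  symm
  refine Finset.card_bij (fun h _ => Phi P (ext h)) ?_ ?_ ?_
  · intro h hh
    simp only [Finset.mem_filter, Finset.mem_univ, true_and] at hh ⊢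
    constructor
    · exact Finset.mem_image.mpr ⟨ext h, Finset.mem_univ _, rfl⟩
    · rw [nne_Phi hP.1.2 (ext h), ← hA, himg h, hh]
  · intro h1 hh1 h2 hh2 heq
    funext a
    have := Phi_g_eq hP heq (hmemA.mp a.2)
    rw [hext] at this
    simpa [a.2] using this
  · intro Pi hPi
    simp only [Finset.mem_filter, Finset.mem_image, Finset.mem_univ, true_and] at hPi
    obtain ⟨⟨g, rfl⟩, hnne⟩ := hPi
    refine ⟨fun a => g a.1, ?_, ?_⟩
    · simp only [Finset.mem_filter, Finset.mem_univ, true_and]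
      rw [← himg (fun a => g a.1)]
      have hgx : A.image (ext fun a => g a.1) = A.image g := by
        apply Finset.image_congr
        intro p hp
        have hp' : p ∈ A := hp
        rw [hext]
        simp [hp']
      rw [hgx, hA, ← nne_Phi hP.1.2 g, hnne]
    · apply Phi_congr
      intro p hp
      rw [hext]
      simp [hmemA.mpr hp]

lemma step_card (n k j : ℕ) :
    ((RVfin n (k + 1)).filter (fun Pi => nne Pi = j)).card
      = ∑ P ∈ RVfin n k, sEntry n (nne P) j := by
  have hset : (RVfin n (k + 1)).filter (fun Pi => nne Pi = j)
      = (RVfin n k).biUnion (fun P =>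
          ((univ : Finset (Fin n → Fin n)).image (fun g => Phi P g)).filter
            (fun Pi => nne Pi = j)) := by
    ext Pi
    simp only [Finset.mem_filter, Finset.mem_biUnion, Finset.mem_image, Finset.mem_univ,
      true_and, mem_RVfin]
    constructor
    · rintro ⟨hv, hn⟩
      obtain ⟨hP, g, hg⟩ := decompose hv
      exact ⟨restrictV k Pi, hP, ⟨g, hg.symm⟩, hn⟩
    · rintro ⟨P, hP, ⟨g, rfl⟩, hn⟩
      exact ⟨isRvalid_Phi hP g, hn⟩
  rw [hset, Finset.card_biUnion]
  · refine Finset.sum_congr rfl (fun P hP => per_P_card (mem_RVfin.mp hP) j)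
  · intro P hP P' hP' hne
    rw [Function.onFun, Finset.disjoint_left]
    rintro Pi h1 h2
    simp only [Finset.mem_filter, Finset.mem_image, Finset.mem_univ, true_and] at h1 h2
    obtain ⟨⟨g, rfl⟩, _⟩ := h1
    obtain ⟨⟨g', hg'⟩, _⟩ := h2
    exact hne (Phi_P_eq (mem_RVfin.mp hP).1.2 (mem_RVfin.mp hP').1.2 hg'.symm)

def rho0 (n : ℕ) : Fin n → Finset ℕ := fun p => if p.val = 0 then {1} else ∅

lemma isRvalid_rho0 (n : ℕ) (hn : 1 ≤ n) : IsRvalid 0 (rho0 n) := by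
  refine ⟨⟨?_, ?_⟩, ?_, ?_⟩
  · intro p q hpq
    by_cases hp : p.val = 0 <;> by_cases hq : q.val = 0
    · exact absurd (Fin.ext (by omega)) hpq
    · simp [rho0, hp, hq]
    · simp [rho0, hp, hq]
    · simp [rho0, hp, hq]
  · ext x
    rw [Finset.mem_sup]
    simp only [Finset.mem_univ, true_and, pow_zero, Finset.Icc_self, Finset.mem_singleton]
    constructor
    · rintro ⟨q, hq⟩
      rw [rho0] at hq
      by_cases h : q.val = 0 <;> simp [h] at hq
      exact hq
    · rintro rfl
      exact ⟨⟨0, hn⟩, by rw [rho0]; simp⟩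
  · intro p hp
    rw [rho0]
    simp [hp]
  · intro k' hk'
    omega
lemma RVfin_zero (n : ℕ) (hn : 1 ≤ n) : RVfin n 0 = {rho0 n} := by
  ext ρ
  rw [mem_RVfin, Finset.mem_singleton]
  constructor
  · rintro ⟨⟨hdis, hsup⟩, hone, _⟩
    have hmem : ∀ {q x}, x ∈ ρ q → x = 1 := by
      intro q x hx
      have : x ∈ Finset.univ.sup ρ := by
        rw [Finset.mem_sup]; exact ⟨q, Finset.mem_univ q, hx⟩
      rw [hsup] at this
      simpa using this
    funext q
    rw [rho0]
    by_cases h : q.val = 0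
    · rw [if_pos h]
      apply Finset.Subset.antisymm
      · intro x hx
        simp [hmem hx]
      · intro x hx
        rw [Finset.mem_singleton] at hx
        subst hx
        exact hone q h
    · rw [if_neg h]
      rw [Finset.eq_empty_iff_forall_notMem]
      intro x hx
      have hx1 := hmem hx
      subst hx1
      have h0 : (⟨0, hn⟩ : Fin n) ≠ q := fun he => h (by rw [← he])
      exact Finset.disjoint_left.mp (hdis ⟨0, hn⟩ q h0) (hone ⟨0, hn⟩ rfl) hx
  · rintro rfl
    exact isRvalid_rho0 n hn

lemma nne_rho0 (n : ℕ) (hn : 1 ≤ n) : nne (rho0 n) = 1 := by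
  rw [nne]
  rw [show Finset.univ.filter (fun q => rho0 n q ≠ ∅) = {(⟨0, hn⟩ : Fin n)} from ?_]
  · exact Finset.card_singleton _
  · ext q
    simp only [Finset.mem_filter, Finset.mem_univ, true_and, Finset.mem_singleton]
    rw [rho0]
    by_cases h : q.val = 0
    · simp only [if_pos h]
      constructor
      · intro _; exact Fin.ext (by simpa using h)
      · intro _; simp
    · simp only [if_neg h]
      constructor
      · intro hne; exact absurd rfl hne
      · intro he
        exfalso
        apply h
        rw [he]

lemma nne_bounds {n k : ℕ} {ρ : Fin n → Finset ℕ} (hv : IsRvalid k ρ) (hn : 1 ≤ n) :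
    1 ≤ nne ρ ∧ nne ρ ≤ n := by
  constructor
  · rw [nne, Nat.one_le_iff_ne_zero, ← Nat.pos_iff_ne_zero, Finset.card_pos]
    refine ⟨⟨0, hn⟩, ?_⟩
    simp only [Finset.mem_filter, Finset.mem_univ, true_and]
    intro he
    have := hv.2.1 ⟨0, hn⟩ rfl
    rw [he] at this
    simp at this
  · rw [nne]
    calc (Finset.univ.filter (fun q => ρ q ≠ ∅)).card ≤ (Finset.univ : Finset (Fin n)).card :=
      Finset.card_filter_le _ _
    _ = n := by simp

lemma regroup (n k j : ℕ) (hn : 1 ≤ n) :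
    ∑ P ∈ RVfin n k, sEntry n (nne P) j
      = ∑ m ∈ Finset.Icc 1 n,
          ((RVfin n k).filter (fun P => nne P = m)).card * sEntry n m j := by
  rw [← Finset.sum_fiberwise_of_maps_to (g := nne) (t := Finset.Icc 1 n)
    (fun P hP => ?_) (fun P => sEntry n (nne P) j)]
  · refine Finset.sum_congr rfl (fun m _ => ?_)
    rw [Finset.sum_congr rfl (fun P hP => ?_), Finset.sum_const, smul_eq_mul]
    rw [Finset.mem_filter] at hP
    rw [hP.2]
  · rw [Finset.mem_Icc]
    have := nne_bounds (mem_RVfin.mp hP) hn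
    omega



end Assembly
-- ===================== end auxiliary development =====================

theorem stmt12 (n k ℓ : ℕ) (hn : 1 ≤ n) (hℓ1 : 1 ≤ ℓ) (hℓn : ℓ ≤ n) :
    {ρ : Fin n → Finset ℕ | IsRvalid k ρ ∧ nne ρ = ℓ}.ncard =
      (Smat n ^ k) ⟨0, by omega⟩ ⟨ℓ - 1, by omega⟩ := by
  have hset : {ρ : Fin n → Finset ℕ | IsRvalid k ρ ∧ nne ρ = ℓ}
      = ↑((RVfin n k).filter (fun ρ => nne ρ = ℓ)) := by
    ext ρ
    simp only [Set.mem_setOf_eq, Finset.coe_filter, mem_RVfin]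
  rw [hset, Set.ncard_coe_finset]
  clear hset
  induction k generalizing ℓ hℓ1 hℓn with
  | zero =>
    rw [RVfin_zero n hn, pow_zero, Matrix.one_apply]
    rw [Finset.filter_singleton]
    by_cases hℓ : ℓ = 1
    · subst hℓ
      rw [if_pos (nne_rho0 n hn), if_pos (by exact Fin.ext (by simp))]
      simp
    · rw [if_neg (by rw [nne_rho0 n hn]; omega), if_neg ?_]
      · simp
      · intro he
        have := congrArg Fin.val he
        simp at this
        omega
  | succ k ih =>
    rw [step_card n k ℓ, regroup n k ℓ hn, pow_succ, Matrix.mul_apply]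
    have hq : ∀ q : Fin n,
        (Smat n ^ k) ⟨0, by omega⟩ q * Smat n q ⟨ℓ - 1, by omega⟩
          = (((RVfin n k).filter (fun P => nne P = q.val + 1)).card : ℕ)
              * sEntry n (q.val + 1) ℓ := by
      intro q
      have h1 : (Smat n ^ k) ⟨0, by omega⟩ q
          = ((RVfin n k).filter (fun P => nne P = q.val + 1)).card := by
        rw [ih (q.val + 1) (by omega) (by omega)]
        congr 1 <;> exact Fin.ext (by simp)
      have h2 : Smat n q ⟨ℓ - 1, by omega⟩ = sEntry n (q.val + 1) ℓ := by
        show sEntry n (q.val + 1) ((⟨ℓ - 1, by omega⟩ : Fin n).val + 1) = _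
        have hv : ((⟨ℓ - 1, by omega⟩ : Fin n)).val = ℓ - 1 := rfl
        rw [hv]
        congr 1
        omega
      rw [h1, h2]
    rw [Finset.sum_congr rfl (fun q _ => hq q)]
    symm
    refine Finset.sum_bij' (fun (q : Fin n) _ => q.val + 1)
      (fun m hm => (⟨m - 1, by rw [Finset.mem_Icc] at hm; omega⟩ : Fin n))
      ?_ (fun m hm => Finset.mem_univ _) ?_ ?_ ?_
    · intro q _
      rw [Finset.mem_Icc]
      have := q.isLt
      omega
    · intro q _
      exact Fin.ext (by simp)
    · intro m hm
      rw [Finset.mem_Icc] at hm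
      simp
      omega
    · intro q _
      rfl
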